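/- (Deviation equation along the critical curve.) Let k > 0, β ∈ (0, k], ζ > 0 and ω₀ ≥ 1. Then the unique solution of the initial value problem ω″(t) = k²·ω(t) + ζ, ω(0) = ω₀, ω′(0) = 0 is ω(t) = (ω₀ + ζ/k²)·cosh(k·t) − ζ/k²; it satisfies ω(t) > 0 for all t ≥ 0 and ω′(t) > 0 for all t > 0, and moreover ω(t) ≥ ω₀·cosh²(β·t/2) for all t ≥ 0. -/

import Mathlib

/-- A solution of the linear ODE `f' = c·f` with `f 0 = 0` vanishes identically. -/
lemma lin_ode_zero (c : ℝ) (f : ℝ → ℝ) (hf : ∀ t, DifferentiableAt ℝ f t)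
    (hf' : ∀ t, deriv f t = c * f t) (h0 : f 0 = 0) : ∀ t, f t = 0 := by
  intro t
  set F : ℝ → ℝ := fun t => Real.exp (-c * t) * f t with hF
  have hFd : ∀ s, HasDerivAt F ((-c * Real.exp (-c * s)) * f s + Real.exp (-c * s) * deriv f s) s := by
    intro s
    have h1 := (((hasDerivAt_id s).const_mul (-c)).exp)
    simp only [id_eq, mul_one] at h1
    have := h1.mul ((hf s).hasDerivAt)
    exact this.congr_deriv (by ring)
  have hF0 : ∀ s, deriv F s = 0 := by
    intro s
    rw [(hFd s).deriv, hf' s]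
    ring
  have hconst : F t = F 0 :=
    is_const_of_deriv_eq_zero (fun s => (hFd s).differentiableAt) hF0 t 0
  have : Real.exp (-c * t) * f t = 0 := by
    simpa [hF, h0] using hconst
  have hpos := Real.exp_pos (-c * t)
  nlinarith [this, hpos]

theorem deviation_along_critical_curve (k β ζ ω₀ : ℝ)
    (hk : 0 < k) (hβ : 0 < β) (hβk : β ≤ k) (hζ : 0 < ζ) (hω₀ : 1 ≤ ω₀) :
    ((fun t : ℝ => (ω₀ + ζ/k^2) * Real.cosh (k*t) - ζ/k^2) 0 = ω₀
      ∧ deriv (fun t : ℝ => (ω₀ + ζ/k^2) * Real.cosh (k*t) - ζ/k^2) 0 = 0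
      ∧ ∀ t : ℝ,
          deriv (deriv (fun t : ℝ => (ω₀ + ζ/k^2) * Real.cosh (k*t) - ζ/k^2)) t
            = k^2 * ((ω₀ + ζ/k^2) * Real.cosh (k*t) - ζ/k^2) + ζ)
    ∧ (∀ ω : ℝ → ℝ,
        (∀ t : ℝ, DifferentiableAt ℝ ω t) →
        (∀ t : ℝ, DifferentiableAt ℝ (deriv ω) t) →
        (∀ t : ℝ, deriv (deriv ω) t = k^2 * ω t + ζ) →
        ω 0 = ω₀ → deriv ω 0 = 0 →
        ω = fun t : ℝ => (ω₀ + ζ/k^2) * Real.cosh (k*t) - ζ/k^2)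
    ∧ (∀ t : ℝ, 0 ≤ t → 0 < (ω₀ + ζ/k^2) * Real.cosh (k*t) - ζ/k^2)
    ∧ (∀ t : ℝ, 0 < t →
        0 < deriv (fun t : ℝ => (ω₀ + ζ/k^2) * Real.cosh (k*t) - ζ/k^2) t)
    ∧ (∀ t : ℝ, 0 ≤ t →
        ω₀ * (Real.cosh (β*t/2))^2 ≤ (ω₀ + ζ/k^2) * Real.cosh (k*t) - ζ/k^2) := by
  have hk2 : (0:ℝ) < k^2 := by positivity
  set A : ℝ := ω₀ + ζ/k^2 with hA
  set B : ℝ := ζ/k^2 with hB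
  have hBpos : 0 < B := by positivity
  have hApos : 0 < A := by nlinarith
  set φ : ℝ → ℝ := fun t => A * Real.cosh (k*t) - B with hφ
  -- derivative of φ
  have hφd : ∀ t, HasDerivAt φ (A * k * Real.sinh (k*t)) t := by
    intro t
    have h1 : HasDerivAt (fun t : ℝ => k * t) k t := by
      simpa using (hasDerivAt_id t).const_mul k
    have := ((h1.cosh).const_mul A).sub_const B
    exact this.congr_deriv (by ring)
  have hφd' : deriv φ = fun t => A * k * Real.sinh (k*t) :=
    funext fun t => (hφd t).deriv
  have hφdd : ∀ t, HasDerivAt (deriv φ) (A * k^2 * Real.cosh (k*t)) t := by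
    intro t
    rw [hφd']
    have h1 : HasDerivAt (fun t : ℝ => k * t) k t := by
      simpa using (hasDerivAt_id t).const_mul k
    have := (h1.sinh).const_mul (A * k)
    exact this.congr_deriv (by ring)
  have hBk : k^2 * B = ζ := by
    rw [hB]; field_simp
  refine ⟨⟨by show A * Real.cosh (k*0) - B = ω₀; simp [hA], ?_, ?_⟩, ?_, ?_, ?_, ?_⟩
  · show deriv φ 0 = 0
    rw [hφd']; simp
  · intro t
    show deriv (deriv φ) t = k^2 * φ t + ζ
    rw [(hφdd t).deriv, hφ]
    simp only
    nlinarith [Real.cosh_pos (k*t)]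
  · -- uniqueness
    intro ω hωd hωd2 hode hω0 hω'0
    set g : ℝ → ℝ := fun t => ω t - φ t with hg
    have hgd : ∀ t, DifferentiableAt ℝ g t := fun t => (hωd t).sub (hφd t).differentiableAt
    have hgd' : ∀ t, deriv g t = deriv ω t - A * k * Real.sinh (k*t) := by
      intro t
      rw [hg, deriv_fun_sub (hωd t) (hφd t).differentiableAt, (hφd t).deriv]
    have hgdd : ∀ t, DifferentiableAt ℝ (deriv g) t := by
      intro t
      have : deriv g = fun t => deriv ω t - A * k * Real.sinh (k*t) := funext hgd'
      rw [this]
      exact (hωd2 t).sub (by simpa [hφd'] using (hφdd t).differentiableAt)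
    have hgode : ∀ t, deriv (deriv g) t = k^2 * g t := by
      intro t
      have h1 : deriv g = fun t => deriv ω t - deriv φ t := by
        funext s; rw [hgd' s, hφd']
      rw [h1, deriv_fun_sub (hωd2 t) (by rw [hφd'] at *; exact (by simpa [hφd'] using (hφdd t).differentiableAt))]
      rw [hode t]
      have h2 : deriv (deriv φ) t = k^2 * φ t + ζ := by
        rw [(hφdd t).deriv, hφ]; simp only; nlinarith
      rw [show deriv (fun t => deriv φ t) t = deriv (deriv φ) t from rfl, h2, hg]
      ring
    have hg0 : g 0 = 0 := by simp [hg, hφ, hω0, hA]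
    have hg'0 : deriv g 0 = 0 := by rw [hgd' 0]; simp [hω'0]
    -- u = g' - k g satisfies u' = -k u, u 0 = 0
    set u : ℝ → ℝ := fun t => deriv g t - k * g t with hu
    have hud : ∀ t, DifferentiableAt ℝ u t := fun t => (hgdd t).sub ((hgd t).const_mul k)
    have hu' : ∀ t, deriv u t = (-k) * u t := by
      intro t
      rw [hu, deriv_fun_sub (hgdd t) ((hgd t).const_mul k), deriv_const_mul k (hgd t), hgode t]
      simp only
      ring
    have hu0 : u 0 = 0 := by simp [hu, hg0, hg'0]
    have huz : ∀ t, u t = 0 := lin_ode_zero (-k) u hud hu' hu0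
    -- now g' = k g, g 0 = 0 ⇒ g = 0
    have hg' : ∀ t, deriv g t = k * g t := by
      intro t
      have := huz t
      rw [hu] at this
      simp only at this
      linarith
    have hgz : ∀ t, g t = 0 := lin_ode_zero k g hgd hg' hg0
    funext t
    have := hgz t
    rw [hg] at this
    simp only at this
    have : ω t = φ t := by linarith
    simpa [hφ] using this
  · intro t _
    have h1 : 1 ≤ Real.cosh (k*t) := Real.one_le_cosh _
    show 0 < A * Real.cosh (k*t) - B
    nlinarith
  · intro t ht
    show 0 < deriv φ t
    rw [hφd']
    have : 0 < Real.sinh (k*t) := Real.sinh_pos_iff.mpr (by positivity)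
    positivity
  · intro t ht
    have hmono : Real.cosh (β*t) ≤ Real.cosh (k*t) := by
      rw [Real.cosh_le_cosh, abs_of_nonneg (by positivity), abs_of_nonneg (by positivity)]
      nlinarith
    have e1 := Real.cosh_two_mul (β*t/2)
    rw [show 2*(β*t/2) = β*t by ring] at e1
    have e2 := Real.cosh_sq_sub_sinh_sq (β*t/2)
    have h1 : 1 ≤ Real.cosh (β*t/2) := Real.one_le_cosh _
    have h2 : 1 ≤ Real.cosh (k*t) := Real.one_le_cosh _
    show ω₀ * (Real.cosh (β*t/2))^2 ≤ A * Real.cosh (k*t) - B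
    nlinarith
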